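/- For every a in (0,1), every even nonnegative integer k, and every x > 1, a·k!/x^{k+1} < ψ⁽ᵏ⁾(x+a) - ψ⁽ᵏ⁾(x) < ψ⁽ᵏ⁾(a) - ψ⁽ᵏ⁾(1) + k!·(a/x^{k+1} + 1/a^{k+1} - a). -/

import Mathlib

open Set Filter Topology Finset Real

lemma hasSum_telescope {f : ℕ → ℝ} (hf : Tendsto f atTop (nhds 0))
    (hnn : ∀ n, 0 ≤ f n - f (n+1)) :
    HasSum (fun n => f n - f (n+1)) (f 0) := by
  have hant : Antitone f := antitone_nat_of_succ_le (fun n => by linarith [hnn n])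
  have hpos : ∀ n, 0 ≤ f n := by
    intro n
    refine le_of_tendsto hf ?_
    filter_upwards [eventually_ge_atTop n] with m hm
    exact hant hm
  have hsum : Summable (fun n => f n - f (n+1)) := by
    apply summable_of_sum_range_le hnn
    intro n
    rw [Finset.sum_range_sub' f n]
    linarith [hpos n]
  rw [hsum.hasSum_iff_tendsto_nat]
  have : Tendsto (fun n => f 0 - f n) atTop (nhds (f 0 - 0)) := tendsto_const_nhds.sub hf
  simp only [sub_zero] at this
  convert this using 2 with n
  exact Finset.sum_range_sub' f n

lemma summable_base : Summable (fun n : ℕ => (((n:ℝ) + 1) ^ 2)⁻¹) := by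
  have := Real.summable_one_div_nat_pow.mpr (le_refl 2)
  rw [← summable_nat_add_iff 1] at this
  simpa [one_div] using this

lemma summable_P {c : ℝ} (hc : 0 < c) {m : ℕ} (hm : 2 ≤ m) :
    Summable (fun n : ℕ => ((c + n) ^ m)⁻¹) := by
  rw [← summable_nat_add_iff 1]
  apply Summable.of_nonneg_of_le (fun n => by positivity) _ summable_base
  intro n
  have h1 : ((n:ℝ) + 1) ≤ c + (n + 1 : ℕ) := by push_cast; linarith
  have h2 : (1:ℝ) ≤ c + (n + 1 : ℕ) := by push_cast; linarith [n.cast_nonneg (α := ℝ)]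
  have h3 : ((n:ℝ) + 1) ^ 2 ≤ (c + (n + 1 : ℕ)) ^ m := by
    calc ((n:ℝ) + 1) ^ 2 ≤ (c + (n + 1 : ℕ)) ^ 2 := by
          apply pow_le_pow_left₀ (by positivity) h1
      _ ≤ (c + (n + 1 : ℕ)) ^ m := pow_le_pow_right₀ h2 hm
  exact inv_anti₀ (by positivity) h3

lemma hasDerivAt_term {m : ℕ} (hm : 1 ≤ m) (n : ℕ) {x : ℝ} (h0 : 0 < x + n) :
    HasDerivAt (fun y : ℝ => ((y + n) ^ m)⁻¹) (-(m:ℝ) * ((x + n) ^ (m+1))⁻¹) x := by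
  have h := ((hasDerivAt_pow m (x + n)).inv (pow_ne_zero _ h0.ne')).comp x
    ((hasDerivAt_id x).add_const (n:ℝ))
  replace h : HasDerivAt (fun y : ℝ => ((y + n) ^ m)⁻¹) _ x := h
  convert h using 1
  have : (x + n) ^ (m - 1) * (x + n) ^ (m + 1) = ((x + n) ^ m) ^ 2 := by
    rw [← pow_add, ← pow_mul]
    congr 1
    omega
  field_simp
  nlinarith [this]

lemma norm_bound {m : ℕ} (n : ℕ) {c y : ℝ} (hc : 0 < c) (hy : c ≤ y) :
    ‖-(m:ℝ) * ((y + n) ^ (m+1))⁻¹‖ ≤ (m:ℝ) * ((c + n) ^ (m+1))⁻¹ := by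
  have h1 : (0:ℝ) < c + n := by positivity
  have h2 : (0:ℝ) < y + n := by linarith
  rw [norm_mul, norm_neg, Real.norm_natCast, norm_inv, norm_pow, Real.norm_of_nonneg h2.le]
  gcongr

lemma hasDerivAt_Pse {m : ℕ} (hm : 2 ≤ m) {x : ℝ} (hx : 0 < x) :
    HasDerivAt (fun z : ℝ => ∑' n : ℕ, ((z + n) ^ m)⁻¹)
      (-(m:ℝ) * ∑' n : ℕ, ((x + n) ^ (m+1))⁻¹) x := by
  have hhalf : 0 < x / 2 := by linarith
  have key := hasDerivAt_tsum_of_isPreconnected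
    (u := fun n : ℕ => (m:ℝ) * ((x/2 + n) ^ (m+1))⁻¹)
    (g := fun (n : ℕ) (z : ℝ) => ((z + n) ^ m)⁻¹)
    (g' := fun (n : ℕ) (z : ℝ) => -(m:ℝ) * ((z + n) ^ (m+1))⁻¹)
    ((summable_P hhalf (by omega)).mul_left _) isOpen_Ioi isPreconnected_Ioi
    (fun n y hy => hasDerivAt_term (by omega) n (by have h : x/2 < y := hy; have := n.cast_nonneg (α := ℝ); linarith))
    (fun n y hy => norm_bound n hhalf (le_of_lt hy))
    (show x ∈ Ioi (x/2) by simpa using by linarith)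
    (summable_P hx hm)
    (show x ∈ Ioi (x/2) by simpa using by linarith)
  rwa [tsum_mul_left] at key

noncomputable def digamma : ℝ → ℝ := deriv (fun x => Real.log (Real.Gamma x))

noncomputable def gterm (n : ℕ) (x : ℝ) : ℝ := ((n:ℝ) + 1)⁻¹ - (x + n)⁻¹

lemma summable_gterm {x : ℝ} (hx : 0 < x) : Summable (fun n => gterm n x) := by
  rw [← summable_nat_add_iff 1]
  apply Summable.of_norm
  refine Summable.of_nonneg_of_le (f := fun n : ℕ => |x - 1| * (((n:ℝ) + 1) ^ 2)⁻¹)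
    (fun n => norm_nonneg _) ?_ (summable_base.mul_left _)
  intro n
  have h1 : (0:ℝ) < (n:ℝ) + 2 := by positivity
  have h2 : (0:ℝ) < x + n + 1 := by positivity
  have heq : gterm (n + 1) x = (x - 1) * (((n:ℝ)+2) * (x + n + 1))⁻¹ := by
    unfold gterm
    push_cast
    rw [show x + ((n:ℝ) + 1) = x + n + 1 by ring]
    field_simp
    ring
  rw [heq, norm_mul, norm_inv, Real.norm_of_nonneg (mul_pos h1 h2).le, Real.norm_eq_abs]
  have hle : ((n:ℝ) + 1) ^ 2 ≤ ((n:ℝ)+2) * (x + n + 1) := by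
    nlinarith [n.cast_nonneg (α := ℝ)]
  have := inv_anti₀ (by positivity) hle
  exact mul_le_mul_of_nonneg_left this (abs_nonneg _)

lemma hasDerivAt_gterm (n : ℕ) {x : ℝ} (h0 : 0 < x + n) :
    HasDerivAt (fun y => gterm n y) (((x + n) ^ 2)⁻¹) x := by
  have h := ((hasDerivAt_pow 1 (x + n)).inv (pow_ne_zero _ h0.ne')).comp x
    ((hasDerivAt_id x).add_const (n:ℝ))
  have h2 : HasDerivAt (fun y : ℝ => ((y + n) ^ 1)⁻¹) (-((x+n)^2)⁻¹) x := by
    replace h : HasDerivAt (fun y : ℝ => ((y + n) ^ 1)⁻¹) _ x := h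
    convert h using 1
    have : (0:ℝ) < (x+n)^2 := by positivity
    field_simp
    simp
  simp only [pow_one] at h2
  have := (hasDerivAt_const x (((n:ℝ)+1)⁻¹)).sub h2
  rw [zero_sub, neg_neg] at this
  exact this

lemma hasDerivAt_gsum {x : ℝ} (hx : 0 < x) :
    HasDerivAt (fun z : ℝ => ∑' n : ℕ, gterm n z) (∑' n : ℕ, ((x + n) ^ 2)⁻¹) x := by
  have hhalf : 0 < x / 2 := by linarith
  refine hasDerivAt_tsum_of_isPreconnected
    (u := fun n : ℕ => ((x/2 + n) ^ 2)⁻¹)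
    (g := fun (n : ℕ) (z : ℝ) => gterm n z)
    (g' := fun (n : ℕ) (z : ℝ) => ((z + n) ^ 2)⁻¹)
    (summable_P hhalf (le_refl 2)) isOpen_Ioi isPreconnected_Ioi
    (fun n y hy => hasDerivAt_gterm n (by have h : x/2 < y := hy
                                          have := n.cast_nonneg (α := ℝ); linarith))
    (fun n y hy => ?_)
    (show x ∈ Ioi (x/2) by simpa using by linarith)
    (summable_gterm hx)
    (show x ∈ Ioi (x/2) by simpa using by linarith)
  · have h : x/2 < y := hy
    have h1 : (0:ℝ) < x/2 + n := by positivity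
    have h2 : (0:ℝ) < y + n := by linarith
    rw [Real.norm_of_nonneg (by positivity)]
    exact inv_anti₀ (by positivity) (pow_le_pow_left₀ h1.le (by linarith) 2)

-- digamma basics
lemma digamma_differentiableAt {x : ℝ} (hx : 0 < x) :
    DifferentiableAt ℝ (fun x => Real.log (Real.Gamma x)) x := by
  refine ((Real.differentiableAt_Gamma ?_).log (Real.Gamma_ne_zero ?_)) <;>
    exact fun m => ne_of_gt (by push_cast; linarith [m.cast_nonneg (α := ℝ)])

lemma digamma_rec {x : ℝ} (hx : 0 < x) : digamma (x + 1) = digamma x + 1/x := by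
  unfold digamma
  rw [← deriv_comp_add_const, one_div, ← Real.deriv_log,
    ← deriv_add (digamma_differentiableAt hx) (Real.differentiableAt_log hx.ne')]
  apply Filter.EventuallyEq.deriv_eq
  filter_upwards [eventually_gt_nhds hx] with y hy
  rw [Real.Gamma_add_one hy.ne', Real.log_mul hy.ne' (Real.Gamma_pos_of_pos hy).ne', add_comm]
  rfl

lemma digamma_mono : MonotoneOn digamma (Ioi (0:ℝ)) := by
  have h := ConvexOn.monotoneOn_deriv Real.convexOn_log_Gamma
    (fun z hz => by
      have : DifferentiableAt ℝ (fun x => Real.log (Real.Gamma x)) z :=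
        digamma_differentiableAt hz
      simpa [Function.comp_def] using this)
  simpa [digamma, Function.comp_def] using h

lemma hasSum_pow_sub {x : ℝ} (hx : 0 < x) {m : ℕ} (hm : 1 ≤ m) :
    HasSum (fun n : ℕ => ((x + n) ^ m)⁻¹ - ((x + (n + 1:ℕ)) ^ m)⁻¹) ((x ^ m)⁻¹) := by
  have hpos : ∀ n : ℕ, (0:ℝ) < x + n := fun n => by positivity
  have htend : Tendsto (fun n : ℕ => ((x + n) ^ m)⁻¹) atTop (nhds 0) := by
    apply Tendsto.comp tendsto_inv_atTop_zero
    apply Tendsto.comp (tendsto_pow_atTop (by omega))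
    exact tendsto_atTop_add_const_left atTop x tendsto_natCast_atTop_atTop
  have hnn : ∀ n : ℕ, 0 ≤ ((x + n) ^ m)⁻¹ - ((x + (n + 1:ℕ)) ^ m)⁻¹ := by
    intro n
    have h1 : (x + n) ^ m ≤ (x + (n+1:ℕ)) ^ m := by
      apply pow_le_pow_left₀ (hpos n).le
      push_cast; linarith
    have := inv_anti₀ (pow_pos (hpos n) m) h1
    linarith
  have := hasSum_telescope htend hnn
  simpa using this

noncomputable def gfun (x : ℝ) : ℝ := digamma 1 + ∑' n : ℕ, gterm n x

lemma gfun_one : gfun 1 = digamma 1 := by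
  have : ∀ n : ℕ, gterm n 1 = 0 := fun n => by simp [gterm, add_comm]
  simp [gfun, this]

lemma gfun_rec {x : ℝ} (hx : 0 < x) : gfun (x + 1) = gfun x + 1/x := by
  have h1 := summable_gterm hx
  have h2 := summable_gterm (by linarith : (0:ℝ) < x + 1)
  have key : ∀ n : ℕ, gterm n (x + 1) - gterm n x
      = ((x + n) ^ 1)⁻¹ - ((x + (n + 1:ℕ)) ^ 1)⁻¹ := by
    intro n
    simp only [gterm, pow_one]
    push_cast
    ring_nf
  have h3 : HasSum (fun n => gterm n (x+1) - gterm n x) (x⁻¹) := by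
    have := hasSum_pow_sub hx (le_refl 1)
    simp only [pow_one] at this ⊢
    exact HasSum.congr_fun this (fun n => by rw [key n, pow_one, pow_one])
  have h4 : ∑' n, (gterm n (x+1) - gterm n x) = x⁻¹ := h3.tsum_eq
  rw [Summable.tsum_sub h2 h1] at h4
  unfold gfun
  rw [one_div]
  linarith [h4]

lemma gfun_mono {x y : ℝ} (hx : 0 < x) (hxy : x ≤ y) : gfun x ≤ gfun y := by
  unfold gfun
  have h : ∀ n : ℕ, gterm n x ≤ gterm n y := by
    intro n
    have h1 : (0:ℝ) < x + n := by positivity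
    have := inv_anti₀ h1 (by linarith : x + n ≤ y + n)
    simp only [gterm]
    linarith
  linarith [Summable.tsum_le_tsum h (summable_gterm hx) (summable_gterm (by linarith))]

lemma rec_iter (F : ℝ → ℝ) (hF : ∀ x : ℝ, 0 < x → F (x + 1) = F x + 1/x) :
    ∀ (n : ℕ) (x : ℝ), 0 < x → F (x + n) = F x + ∑ j ∈ Finset.range n, 1/(x + j) := by
  intro n
  induction n with
  | zero => intro x _; simp
  | succ n ih =>
    intro x hx
    have h1 : x + (n + 1 : ℕ) = (x + n) + 1 := by push_cast; ring
    rw [h1, hF (x + n) (by positivity), ih x hx, Finset.sum_range_succ]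
    ring

lemma digamma_nat {n : ℕ} (hn : 1 ≤ n) : digamma n = gfun n := by
  obtain ⟨m, rfl⟩ : ∃ m, n = 1 + m := ⟨n - 1, by omega⟩
  have h1 := rec_iter digamma (fun x hx => digamma_rec hx) m 1 one_pos
  have h2 := rec_iter gfun (fun x hx => gfun_rec hx) m 1 one_pos
  push_cast
  rw [h1, h2, gfun_one]

lemma digamma_eq_gfun_Ioc {x : ℝ} (hx : x ∈ Ioc (0:ℝ) 1) : digamma x = gfun x := by
  obtain ⟨hx0, hx1⟩ := hx
  have key : ∀ n : ℕ, 1 ≤ n → |digamma x - gfun x| ≤ 1/n := by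
    intro n hn
    have hn0 : (0:ℝ) < n := by exact_mod_cast hn
    have hy0 : (0:ℝ) < x + n := by positivity
    have hd := rec_iter digamma (fun z hz => digamma_rec hz) n x hx0
    have hg := rec_iter gfun (fun z hz => gfun_rec hz) n x hx0
    have heq : digamma x - gfun x = digamma (x + n) - gfun (x + n) := by
      rw [hd, hg]; ring
    have hup : digamma (x + n) ≤ gfun (x + n) + 1/n := by
      have h1 : digamma (x + n) ≤ digamma (1 + n) :=
        digamma_mono (mem_Ioi.mpr hy0) (mem_Ioi.mpr (by positivity)) (by linarith)
      have h2 : digamma (1 + n : ℝ) = gfun (1 + n : ℝ) := by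
        have := digamma_nat (n := 1 + n) (by omega)
        push_cast at this
        exact this
      have h3 : gfun (1 + n : ℝ) = gfun n + 1/n := by
        rw [add_comm (1:ℝ) (n:ℝ)]
        exact gfun_rec hn0
      have h4 : gfun (n:ℝ) ≤ gfun (x + n) := gfun_mono hn0 (by linarith)
      linarith
    have hlo : gfun (x + n) - 1/n ≤ digamma (x + n) := by
      have h1 : digamma (n:ℝ) ≤ digamma (x + n) :=
        digamma_mono (mem_Ioi.mpr hn0) (mem_Ioi.mpr hy0) (by linarith)
      have h2 : digamma (n:ℝ) = gfun n := digamma_nat hn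
      have h3 : gfun (1 + n : ℝ) = gfun n + 1/n := by
        rw [add_comm (1:ℝ) (n:ℝ)]
        exact gfun_rec hn0
      have h4 : gfun (x + n) ≤ gfun (1 + n) := gfun_mono hy0 (by linarith)
      linarith
    rw [heq, abs_le]
    constructor <;> linarith
  by_contra hne
  have habs : 0 < |digamma x - gfun x| := abs_pos.mpr (sub_ne_zero.mpr hne)
  obtain ⟨n, hn⟩ := exists_nat_one_div_lt habs
  have := key (n + 1) (by omega)
  push_cast at this hn
  linarith

lemma digamma_eq_gfun {x : ℝ} (hx : 0 < x) : digamma x = gfun x := by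
  set n : ℕ := ⌈x⌉₊ - 1 with hn
  have hceil : 1 ≤ ⌈x⌉₊ := Nat.ceil_pos.mpr hx
  have hncast : (n:ℝ) = (⌈x⌉₊:ℝ) - 1 := by
    rw [hn, Nat.cast_sub hceil, Nat.cast_one]
  have hlt : (n:ℝ) < x := by
    have := Nat.ceil_lt_add_one hx.le
    rw [hncast]; linarith
  have hle : x - n ≤ 1 := by
    have := Nat.le_ceil x
    rw [hncast]; linarith
  set x₀ := x - n with hx₀
  have hx₀pos : 0 < x₀ := by rw [hx₀]; linarith
  have hxeq : x = x₀ + n := by rw [hx₀]; ring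
  have hd := rec_iter digamma (fun z hz => digamma_rec hz) n x₀ hx₀pos
  have hg := rec_iter gfun (fun z hz => gfun_rec hz) n x₀ hx₀pos
  rw [hxeq, hd, hg, digamma_eq_gfun_Ioc ⟨hx₀pos, hle⟩]

noncomputable def polygamma (n : ℕ) : ℝ → ℝ := deriv^[n] digamma

noncomputable def Pse (m : ℕ) (x : ℝ) : ℝ := ∑' n : ℕ, ((x + n) ^ m)⁻¹

lemma eventually_digamma {x : ℝ} (hx : 0 < x) : digamma =ᶠ[nhds x] gfun :=
  Filter.eventuallyEq_of_mem (isOpen_Ioi.mem_nhds hx) (fun y hy => digamma_eq_gfun hy)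

lemma hasDerivAt_gfun {x : ℝ} (hx : 0 < x) : HasDerivAt gfun (Pse 2 x) x := by
  have := (hasDerivAt_gsum hx).const_add (digamma 1)
  exact this

lemma polygamma_eq' {k : ℕ} (hk : 1 ≤ k) :
    ∀ {x : ℝ}, 0 < x → polygamma k x = (-1:ℝ)^(k+1) * (k.factorial) * Pse (k+1) x := by
  induction k, hk using Nat.le_induction with
  | base =>
    intro x hx
    have h1 : polygamma 1 x = deriv digamma x := rfl
    rw [h1, (eventually_digamma hx).deriv_eq, (hasDerivAt_gfun hx).deriv]
    norm_num
  | succ k hk1 ih =>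
    intro x hx
    have h1 : polygamma (k+1) x = deriv (polygamma k) x := by
      show deriv^[k+1] digamma x = _
      rw [Function.iterate_succ_apply']
      rfl
    have hev : polygamma k =ᶠ[nhds x]
        (fun z => (-1:ℝ)^(k+1) * (k.factorial) * Pse (k+1) z) :=
      Filter.eventuallyEq_of_mem (isOpen_Ioi.mem_nhds hx) (fun y hy => ih hy)
    have hder : HasDerivAt (fun z => (-1:ℝ)^(k+1) * (k.factorial) * Pse (k+1) z)
        ((-1:ℝ)^(k+1) * (k.factorial) * (-(k+1:ℝ) * Pse (k+2) x)) x := by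
      have := (hasDerivAt_Pse (m := k+1) (by omega) hx).const_mul
        ((-1:ℝ)^(k+1) * (k.factorial))
      simpa [Pse] using this
    rw [h1, hev.deriv_eq, hder.deriv, Nat.factorial_succ]
    push_cast
    ring

lemma polygamma_eq {k : ℕ} (hk : 1 ≤ k) {x : ℝ} (hx : 0 < x) :
    polygamma k x = (-1:ℝ)^(k+1) * (k.factorial) * Pse (k+1) x := polygamma_eq' hk hx

lemma hasDerivAt_polygamma (k : ℕ) {x : ℝ} (hx : 0 < x) :
    HasDerivAt (polygamma k) (polygamma (k+1) x) x := by
  rcases Nat.eq_zero_or_pos k with rfl | hk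
  · have h := (hasDerivAt_gfun hx).congr_of_eventuallyEq (eventually_digamma hx)
    have h2 : polygamma 1 x = Pse 2 x := by
      rw [polygamma_eq (le_refl 1) hx]; norm_num
    rw [show polygamma 0 = digamma from rfl, h2]
    exact h
  · have hev : polygamma k =ᶠ[nhds x]
        (fun z => (-1:ℝ)^(k+1) * (k.factorial) * Pse (k+1) z) :=
      Filter.eventuallyEq_of_mem (isOpen_Ioi.mem_nhds hx)
        (fun y hy => polygamma_eq hk hy)
    have hder : HasDerivAt (fun z => (-1:ℝ)^(k+1) * (k.factorial) * Pse (k+1) z)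
        ((-1:ℝ)^(k+1) * (k.factorial) * (-(k+1:ℝ) * Pse (k+2) x)) x := by
      have := (hasDerivAt_Pse (m := k+1) (by omega) hx).const_mul
        ((-1:ℝ)^(k+1) * (k.factorial))
      simpa [Pse] using this
    have hval : polygamma (k+1) x
        = (-1:ℝ)^(k+1) * (k.factorial) * (-(k+1:ℝ) * Pse (k+2) x) := by
      rw [polygamma_eq (by omega) hx, Nat.factorial_succ]
      push_cast
      ring
    rw [hval]
    exact hder.congr_of_eventuallyEq hev

lemma pointwise_ineq {c a : ℝ} (hc : 0 < c) (ha : 0 < a) (ha1 : a < 1)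
    {m : ℕ} (hm : 1 ≤ m) :
    a * ((c ^ m)⁻¹ - ((c + 1) ^ m)⁻¹) < (c ^ m)⁻¹ - ((c + a) ^ m)⁻¹ := by
  have sc := strictConvexOn_zpow (m := -(m:ℤ)) (by omega) (by omega)
  have h := sc.2 (mem_Ioi.mpr (by linarith : (0:ℝ) < c + 1)) (mem_Ioi.mpr hc)
    (by intro hcc; linarith [hcc.le]) ha (by linarith : 0 < 1 - a) (by ring)
  simp only [smul_eq_mul] at h
  have harg : a * (c + 1) + (1 - a) * c = c + a := by ring
  rw [harg] at h
  have hz : ∀ y : ℝ, 0 < y → y ^ (-(m:ℤ)) = (y ^ m)⁻¹ := by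
    intro y hy
    rw [zpow_neg, zpow_natCast]
  rw [hz _ (by linarith), hz _ (by linarith), hz _ hc] at h
  nlinarith [h]

lemma key_ineq {x a : ℝ} (hx : 0 < x) (ha : 0 < a) (ha1 : a < 1)
    {m : ℕ} (hm : 1 ≤ m) :
    a * (x ^ m)⁻¹ < ∑' n : ℕ, (((x + n) ^ m)⁻¹ - ((x + a + n) ^ m)⁻¹) := by
  set s : ℕ → ℝ := fun n => a * (((x + n) ^ m)⁻¹ - ((x + (n + 1:ℕ)) ^ m)⁻¹) with hs_def
  set t : ℕ → ℝ := fun n => ((x + n) ^ m)⁻¹ - ((x + a + n) ^ m)⁻¹ with ht_def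
  have hposn : ∀ n : ℕ, (0:ℝ) < x + n := fun n => by positivity
  have hs : HasSum s (a * (x ^ m)⁻¹) := (hasSum_pow_sub hx hm).mul_left a
  have hnn : ∀ n, 0 ≤ s n := by
    intro n
    apply mul_nonneg ha.le
    have h1 : (x + n) ^ m ≤ (x + (n+1:ℕ)) ^ m :=
      pow_le_pow_left₀ (hposn n).le (by push_cast; linarith) m
    have := inv_anti₀ (pow_pos (hposn n) m) h1
    linarith
  have hst : ∀ n, s n < t n := by
    intro n
    have h := pointwise_ineq (hposn n) ha ha1 hm
    have e1 : x + (n + 1 : ℕ) = (x + n) + 1 := by push_cast; ring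
    have e2 : x + a + n = (x + n) + a := by ring
    simp only [hs_def, ht_def, e1, e2]
    exact h
  have htle : ∀ n, t n ≤ ((x + n) ^ m)⁻¹ - ((x + (n+1:ℕ)) ^ m)⁻¹ := by
    intro n
    have h1 : (x + a + n) ^ m ≤ (x + (n+1:ℕ)) ^ m :=
      pow_le_pow_left₀ (by positivity) (by push_cast; linarith) m
    have h2 := inv_anti₀ (pow_pos (by positivity : (0:ℝ) < x + a + n) m) h1
    simp only [ht_def]
    linarith
  have htnn : ∀ n, 0 ≤ t n := by
    intro n
    have h1 : (x + n) ^ m ≤ (x + a + n) ^ m :=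
      pow_le_pow_left₀ (hposn n).le (by linarith) m
    have := inv_anti₀ (pow_pos (hposn n) m) h1
    simp only [ht_def]
    linarith
  have hts : Summable t :=
    Summable.of_nonneg_of_le htnn htle (hasSum_pow_sub hx hm).summable
  have := Summable.tsum_lt_tsum_of_nonneg hnn (fun n => (hst n).le) (hst 0) hts
  rwa [hs.tsum_eq] at this

lemma D_eq {k : ℕ} (hk : Even k) {x b : ℝ} (hx : 0 < x) (hb : 0 < b) :
    polygamma k (x + b) - polygamma k x
      = (k.factorial : ℝ) * ∑' n : ℕ, (((x + n) ^ (k+1))⁻¹ - ((x + b + n) ^ (k+1))⁻¹) := by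
  rcases Nat.eq_zero_or_pos k with rfl | hkpos
  · have h0 : polygamma 0 = digamma := rfl
    rw [h0, digamma_eq_gfun hx, digamma_eq_gfun (by linarith : (0:ℝ) < x + b)]
    have hsub : gfun (x + b) - gfun x = ∑' n : ℕ, (gterm n (x + b) - gterm n x) := by
      rw [Summable.tsum_sub (summable_gterm (by linarith)) (summable_gterm hx)]
      simp [gfun]
    rw [hsub]
    simp only [Nat.factorial_zero, Nat.cast_one, one_mul]
    apply tsum_congr
    intro n
    simp only [gterm, pow_one]
    ring
  · have hk2 : 2 ≤ k := by
      obtain ⟨m, rfl⟩ := hk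
      omega
    have hsign : (-1:ℝ)^(k+1) = -1 := (Even.add_one hk).neg_one_pow
    rw [polygamma_eq (by omega) (by linarith : (0:ℝ) < x + b),
      polygamma_eq (by omega) hx, hsign]
    have hsub : Pse (k+1) x - Pse (k+1) (x + b)
        = ∑' n : ℕ, (((x + n) ^ (k+1))⁻¹ - ((x + b + n) ^ (k+1))⁻¹) := by
      rw [Summable.tsum_sub (summable_P hx (by omega)) (summable_P (by linarith) (by omega))]
      rfl
    rw [← hsub]
    ring

lemma rec_k {k : ℕ} (hk : Even k) {a : ℝ} (ha : 0 < a) :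
    polygamma k (a + 1) = polygamma k a + (k.factorial : ℝ) * ((a ^ (k+1))⁻¹) := by
  rcases Nat.eq_zero_or_pos k with rfl | hkpos
  · have h0 : polygamma 0 = digamma := rfl
    rw [h0, digamma_rec ha]
    simp [one_div]
  · have hk2 : 2 ≤ k := by obtain ⟨m, rfl⟩ := hk; omega
    have hsign : (-1:ℝ)^(k+1) = -1 := (Even.add_one hk).neg_one_pow
    have hshift : Pse (k+1) (a + 1) = Pse (k+1) a - (a ^ (k+1))⁻¹ := by
      have h := Summable.tsum_eq_zero_add (f := fun n : ℕ => ((a + n) ^ (k+1))⁻¹)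
        (summable_P ha (by omega))
      have h2 : Pse (k+1) (a + 1) = ∑' n : ℕ, ((a + (n + 1:ℕ)) ^ (k+1))⁻¹ := by
        apply tsum_congr
        intro n
        congr 2
        push_cast
        ring
      simp only [Nat.cast_zero, add_zero] at h
      rw [h2]
      have : Pse (k+1) a = (a ^ (k+1))⁻¹ + ∑' n : ℕ, ((a + (n + 1:ℕ)) ^ (k+1))⁻¹ := h
      linarith
    rw [polygamma_eq (by omega) (by linarith : (0:ℝ) < a + 1),
      polygamma_eq (by omega) ha, hsign, hshift]
    ring

lemma hasDerivAt_inv_pow {m : ℕ} (hm : 1 ≤ m) {y : ℝ} (hy : 0 < y) :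
    HasDerivAt (fun z : ℝ => (z ^ m)⁻¹) (-(m:ℝ) * (y ^ (m+1))⁻¹) y := by
  have := hasDerivAt_term hm 0 (x := y) (by simpa using hy)
  simpa using this

lemma G_deriv {k : ℕ} (hk : Even k) {a : ℝ} (ha : 0 < a) (ha1 : a < 1)
    {y : ℝ} (hy : 0 < y) :
    HasDerivAt (fun z : ℝ => polygamma k (z + a) - polygamma k z
        - a * (k.factorial : ℝ) * (z ^ (k+1))⁻¹)
      (polygamma (k+1) (y + a) - polygamma (k+1) y
        + a * (k.factorial : ℝ) * ((k+1:ℝ) * (y ^ (k+2))⁻¹)) y := by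
  have h1 : HasDerivAt (fun z : ℝ => polygamma k (z + a)) (polygamma (k+1) (y + a)) y := by
    have := (hasDerivAt_polygamma k (by linarith : (0:ℝ) < y + a)).comp y
      ((hasDerivAt_id y).add_const a)
    rw [mul_one] at this
    exact this
  have h2 := hasDerivAt_polygamma k hy
  have h3 : HasDerivAt (fun z : ℝ => a * (k.factorial : ℝ) * (z ^ (k+1))⁻¹)
      (a * (k.factorial : ℝ) * (-(k+1:ℝ) * (y ^ (k+2))⁻¹)) y := by
    have := (hasDerivAt_inv_pow (m := k+1) (by omega) hy).const_mul
      (a * (k.factorial : ℝ))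
    simpa using this
  have := (h1.sub h2).sub h3
  replace this : HasDerivAt (fun z : ℝ => polygamma k (z + a) - polygamma k z
      - a * (k.factorial : ℝ) * (z ^ (k+1))⁻¹) _ y := this
  convert this using 1
  push_cast
  ring

lemma G_deriv_neg {k : ℕ} (hk : Even k) {a : ℝ} (ha : 0 < a) (ha1 : a < 1)
    {y : ℝ} (hy : 0 < y) :
    polygamma (k+1) (y + a) - polygamma (k+1) y
      + a * (k.factorial : ℝ) * ((k+1:ℝ) * (y ^ (k+2))⁻¹) < 0 := by
  have hsign : (-1:ℝ)^(k+1+1) = 1 := (hk.add even_two).neg_one_pow.trans rfl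
  have hya : (0:ℝ) < y + a := by linarith
  rw [polygamma_eq (k := k+1) (by omega) hya, polygamma_eq (k := k+1) (by omega) hy, hsign]
  have hsub : Pse (k+2) y - Pse (k+2) (y + a)
      = ∑' n : ℕ, (((y + n) ^ (k+2))⁻¹ - ((y + a + n) ^ (k+2))⁻¹) := by
    rw [Summable.tsum_sub (summable_P hy (by omega)) (summable_P hya (by omega))]
    rfl
  have hkey := key_ineq hy ha ha1 (m := k+2) (by omega)
  have hfact : (((k+1).factorial : ℕ) : ℝ) = ((k:ℝ)+1) * (k.factorial : ℝ) := by
    rw [Nat.factorial_succ]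
    push_cast
    ring
  have hfp : (0:ℝ) < (k.factorial : ℝ) := by exact_mod_cast k.factorial_pos
  have hk1 : (0:ℝ) < (k:ℝ) + 1 := by positivity
  have hprod := mul_pos (mul_pos hk1 hfp)
    (sub_pos.mpr (lt_of_lt_of_le hkey (le_of_eq hsub.symm)))
  rw [hfact]
  nlinarith [hprod]


theorem stmt_12 (a : ℝ) (ha : a ∈ Set.Ioo (0:ℝ) 1) (k : ℕ) (hk : Even k)
    (x : ℝ) (hx : 1 < x) :
    a * (Nat.factorial k : ℝ) / x ^ (k + 1) < polygamma k (x + a) - polygamma k x ∧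
    polygamma k (x + a) - polygamma k x <
      polygamma k a - polygamma k 1 +
        (Nat.factorial k : ℝ) * (a / x ^ (k + 1) + 1 / a ^ (k + 1) - a) := by
  obtain ⟨ha0, ha1⟩ := ha
  have hx0 : (0:ℝ) < x := by linarith
  have hfp : (0:ℝ) < (k.factorial : ℝ) := by exact_mod_cast k.factorial_pos
  constructor
  · rw [D_eq hk hx0 ha0]
    have hkey := key_ineq hx0 ha0 ha1 (m := k+1) (by omega)
    have he : a * (k.factorial : ℝ) / x ^ (k+1) = (k.factorial : ℝ) * (a * (x ^ (k+1))⁻¹) := by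
      rw [div_eq_mul_inv]; ring
    rw [he]
    exact mul_lt_mul_of_pos_left hkey hfp
  · set G : ℝ → ℝ := fun z => polygamma k (z + a) - polygamma k z
      - a * (k.factorial : ℝ) * (z ^ (k+1))⁻¹ with hG
    have hanti : StrictAntiOn G (Ici (1:ℝ)) := by
      apply strictAntiOn_of_deriv_neg (convex_Ici 1)
      · intro y hy
        have hy0 : (0:ℝ) < y := lt_of_lt_of_le one_pos hy
        exact (G_deriv hk ha0 ha1 hy0).continuousAt.continuousWithinAt
      · intro y hy
        rw [interior_Ici] at hy
        have hy0 : (0:ℝ) < y := lt_trans one_pos hy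
        rw [(G_deriv hk ha0 ha1 hy0).deriv]
        exact G_deriv_neg hk ha0 ha1 hy0
    have hlt : G x < G 1 := hanti self_mem_Ici (mem_Ici.mpr hx.le) hx
    have hrec : polygamma k (1 + a) = polygamma k a + (k.factorial : ℝ) * ((a ^ (k+1))⁻¹) := by
      rw [add_comm]
      exact rec_k hk ha0
    have hG1 : G 1 = polygamma k a + (k.factorial : ℝ) * ((a ^ (k+1))⁻¹)
        - polygamma k 1 - a * (k.factorial : ℝ) := by
      rw [hG]
      simp only [one_pow, inv_one, mul_one]
      rw [hrec]
    have hGx : G x = polygamma k (x + a) - polygamma k x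
        - a * (k.factorial : ℝ) * (x ^ (k+1))⁻¹ := rfl
    have he2 : (k.factorial : ℝ) * (a / x ^ (k+1) + 1 / a ^ (k+1) - a)
        = a * (k.factorial : ℝ) * (x ^ (k+1))⁻¹ + (k.factorial : ℝ) * ((a ^ (k+1))⁻¹)
          - a * (k.factorial : ℝ) := by
      rw [div_eq_mul_inv, one_div]; ring
    rw [hGx, hG1] at hlt
    linarith
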